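/- arXiv:1712.02069 — 5 statements merged into one kernel-verified Lean document; each statement's English description precedes it below -/
import Mathlib

section
/- For all integers n ≥ 1 and k ≥ 2, the central-type binomial coefficient satisfies (1/(4(k−1)n)) · (k^k/(k−1)^{k−1})^n < C(k n, n) < (k^k/(k−1)^{k−1})^n, where C(k n, n) denotes the binomial coefficient 'k n choose n'. -/
/-- Sondow's bounds: for integers `n ≥ 1` and `k ≥ 2`,
`(1/(4(k−1)n)) · (k^k/(k−1)^(k−1))^n < C(kn, n) < (k^k/(k−1)^(k−1))^n`. -/
theorem sondow_binomial_bounds (n k : ℕ) (hn : 1 ≤ n) (hk : 2 ≤ k) :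
    (1 / (4 * ((k : ℝ) - 1) * n)) *
        ((k : ℝ) ^ k / ((k : ℝ) - 1) ^ (k - 1)) ^ n
      < (Nat.choose (k * n) n : ℝ) ∧
    (Nat.choose (k * n) n : ℝ)
      < ((k : ℝ) ^ k / ((k : ℝ) - 1) ^ (k - 1)) ^ n := by
  obtain ⟨m, rfl⟩ : ∃ m, k = m + 1 := ⟨k - 1, (Nat.succ_pred_eq_of_pos (by omega)).symm⟩
  have hm : 1 ≤ m := by omega
  set N := (m + 1) * n with hN
  have hnN : n ≤ N := Nat.le_mul_of_pos_left n (by omega)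
  have hNn : N - n = m * n := by
    have h : N = m * n + n := by ring
    rw [h, Nat.add_sub_cancel]
  set f : ℕ → ℕ := fun j => m ^ (N - j) * Nat.choose N j with hf
  -- binomial sum identity
  have hsum : ∑ j ∈ Finset.range (N + 1), f j = (m + 1) ^ N := by
    rw [add_comm m 1, add_pow]
    simp [hf]
  -- increasing up to n
  have hA : ∀ j, j < n → f j ≤ f (j + 1) := by
    intro j hj
    have hjN : j < N := by omega
    have h1 : m * (j + 1) + j ≤ N := by
      have h2 : m * (j + 1) ≤ m * n := Nat.mul_le_mul_left m hj
      have h3 : N = m * n + n := by ring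
      omega
    have h1' : m * (j + 1) ≤ N - j := Nat.le_sub_of_add_le h1
    have hkey : Nat.choose N j * m ≤ Nat.choose N (j + 1) := by
      have h4 : Nat.choose N j * (m * (j + 1)) ≤ Nat.choose N j * (N - j) :=
        Nat.mul_le_mul_left _ h1'
      rw [← Nat.choose_succ_right_eq] at h4
      have h5 : (Nat.choose N j * m) * (j + 1) ≤ Nat.choose N (j + 1) * (j + 1) := by
        calc (Nat.choose N j * m) * (j + 1) = Nat.choose N j * (m * (j + 1)) := by ring
          _ ≤ Nat.choose N (j + 1) * (j + 1) := h4
      exact Nat.le_of_mul_le_mul_right h5 (by omega)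
    have hNj : N - j = (N - (j + 1)) + 1 := by omega
    calc f j = m ^ (N - (j + 1)) * (Nat.choose N j * m) := by
          simp only [hf]; rw [hNj, pow_succ]; ring
      _ ≤ m ^ (N - (j + 1)) * Nat.choose N (j + 1) := Nat.mul_le_mul_left _ hkey
      _ = f (j + 1) := rfl
  -- decreasing from n on
  have hB : ∀ j, n ≤ j → f (j + 1) ≤ f j := by
    intro j hj
    by_cases hjN : j < N
    · have h1 : N ≤ m * (j + 1) + j := by
        have h2 : m * n ≤ m * j := Nat.mul_le_mul_left m hj
        have h3 : N = m * n + n := by ring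
        have h4 : m * (j + 1) = m * j + m := by ring
        omega
      have h1' : N - j ≤ m * (j + 1) := by omega
      have hkey : Nat.choose N (j + 1) ≤ Nat.choose N j * m := by
        have h4 : Nat.choose N j * (N - j) ≤ Nat.choose N j * (m * (j + 1)) :=
          Nat.mul_le_mul_left _ h1'
        rw [← Nat.choose_succ_right_eq] at h4
        have h5 : Nat.choose N (j + 1) * (j + 1) ≤ (Nat.choose N j * m) * (j + 1) := by
          calc Nat.choose N (j + 1) * (j + 1) ≤ Nat.choose N j * (m * (j + 1)) := h4
            _ = (Nat.choose N j * m) * (j + 1) := by ring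
        exact Nat.le_of_mul_le_mul_right h5 (by omega)
      have hNj : N - j = (N - (j + 1)) + 1 := by omega
      calc f (j + 1) = m ^ (N - (j + 1)) * Nat.choose N (j + 1) := rfl
        _ ≤ m ^ (N - (j + 1)) * (Nat.choose N j * m) := Nat.mul_le_mul_left _ hkey
        _ = f j := by simp only [hf]; rw [hNj, pow_succ]; ring
    · have hz : Nat.choose N (j + 1) = 0 := Nat.choose_eq_zero_of_lt (by omega)
      simp [hf, hz]
  -- max term at n
  have hmono : ∀ b, b ≤ n → ∀ a, a ≤ b → f a ≤ f b := by
    intro b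
    induction b with
    | zero => intro _ a ha; interval_cases a; exact le_rfl
    | succ b ih =>
      intro hb a ha
      rcases Nat.lt_or_ge a (b + 1) with h | h
      · exact le_trans (ih (by omega) a (by omega)) (hA b (by omega))
      · have : a = b + 1 := by omega
        rw [this]
  have hanti : ∀ b, n ≤ b → f b ≤ f n := by
    intro b
    induction b with
    | zero => intro hb; omega
    | succ b ih =>
      intro hb
      rcases Nat.lt_or_ge n (b + 1) with h | h
      · exact le_trans (hB b (by omega)) (ih (by omega))
      · have : n = b + 1 := by omega
        rw [this]
  have hmax : ∀ j ∈ Finset.range (N + 1), f j ≤ f n := by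
    intro j _
    rcases le_or_gt j n with h | h
    · exact hmono n le_rfl j h
    · exact hanti j h.le
  -- the two ℕ inequalities
  have hfn : f n = m ^ (m * n) * Nat.choose N n := by rw [hf]; simp [hNn]
  have hfnpos : 0 < f n := by
    rw [hfn]
    exact Nat.mul_pos (pow_pos (by omega) _) (Nat.choose_pos hnN)
  have hup : f n < (m + 1) ^ N := by
    rw [← hsum]
    refine Finset.single_lt_sum (show (0 : ℕ) ≠ n by omega)
      (Finset.mem_range.mpr (by omega)) (Finset.mem_range.mpr (by omega)) ?_
      (fun j _ _ => Nat.zero_le _)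
    simp [hf]
    exact pow_pos (by omega) _
  have hcount : N + 1 < 4 * (m * n) := by
    have h2 : n ≤ m * n := Nat.le_mul_of_pos_left n (by omega)
    have h3 : N = m * n + n := by ring
    omega
  have hlow : (m + 1) ^ N < 4 * (m * n) * f n := by
    calc (m + 1) ^ N ≤ (N + 1) * f n := by
          rw [← hsum]
          simpa using Finset.sum_le_card_nsmul _ _ _ hmax
      _ < 4 * (m * n) * f n := by
          exact Nat.mul_lt_mul_of_lt_of_le hcount le_rfl hfnpos
  -- move to ℝ
  have ha : (0 : ℝ) < (m : ℝ) := by positivity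
  have hapow : (0 : ℝ) < (m : ℝ) ^ (m * n) := by positivity
  have hBpow : ((↑(m + 1) : ℝ) ^ (m + 1) / ((↑(m + 1) : ℝ) - 1) ^ (m + 1 - 1)) ^ n
      = ((m : ℝ) + 1) ^ N / (m : ℝ) ^ (m * n) := by
    have h1 : ((↑(m + 1) : ℝ) - 1) = (m : ℝ) := by push_cast; ring
    have h2 : m + 1 - 1 = m := by omega
    rw [h1, h2, div_pow, ← pow_mul, ← pow_mul]
    push_cast
    ring_nf
    rw [hN]; ring
  have hupR : (Nat.choose N n : ℝ) * (m : ℝ) ^ (m * n) < ((m : ℝ) + 1) ^ N := by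
    have := hup
    rw [hfn] at this
    have h := (Nat.cast_lt (α := ℝ)).mpr this
    push_cast at h
    linarith
  have hlowR : ((m : ℝ) + 1) ^ N < 4 * ((m : ℝ) * n) * ((Nat.choose N n : ℝ) * (m : ℝ) ^ (m * n)) := by
    have := hlow
    rw [hfn] at this
    have h := (Nat.cast_lt (α := ℝ)).mpr this
    push_cast at h
    linarith
  rw [hBpow]
  constructor
  · have hnR : (0 : ℝ) < (n : ℝ) := by exact_mod_cast hn
    have h4 : (0 : ℝ) < 4 * ((↑(m + 1) : ℝ) - 1) * n := by
      push_cast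
      nlinarith [ha, hnR]
    rw [div_mul_eq_mul_div, div_lt_iff₀ h4, one_mul, div_lt_iff₀ hapow]
    push_cast
    nlinarith [hlowR]
  · rw [lt_div_iff₀ hapow]
    exact hupR
end

section
/- Let n ≥ 1 and k ≥ 2 be integers and let q ∈ (0,1) satisfy the equation (1−q)^{k n} = C(k n, n) · (1−q)^{(k−1)n} · q^n. Then q > 1/(1 + k^k/(k−1)^{k−1}). -/
/-- If `q ∈ (0,1)` satisfies `(1−q)^(kn) = C(kn, n) · (1−q)^((k−1)n) · q^n`
for integers `n ≥ 1`, `k ≥ 2`, then `q > 1/(1 + k^k/(k−1)^(k−1))`. -/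
theorem q_lower_bound (n k : ℕ) (hn : 1 ≤ n) (hk : 2 ≤ k) (q : ℝ)
    (hq0 : 0 < q) (hq1 : q < 1)
    (heq : (1 - q) ^ (k * n) =
      (Nat.choose (k * n) n : ℝ) * (1 - q) ^ ((k - 1) * n) * q ^ n) :
    1 / (1 + (k : ℝ) ^ k / ((k : ℝ) - 1) ^ (k - 1)) < q := by
  have hk2 : (2:ℝ) ≤ (k : ℝ) := by exact_mod_cast hk
  set K : ℝ := (k : ℝ) with hK
  have hc : (0:ℝ) < K - 1 := by linarith
  set c : ℝ := K - 1 with hcdef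
  set A : ℝ := K ^ k / c ^ (k - 1) with hA
  have hApos : 0 < A := div_pos (pow_pos (by linarith) k) (pow_pos hc _)
  have h1q : (0:ℝ) < 1 - q := by linarith
  have hkn : k * n = (k - 1) * n + n := by
    obtain ⟨m, rfl⟩ : ∃ m, k = m + 2 := ⟨k - 2, by omega⟩
    show (m + 2) * n = (m + 1) * n + n
    ring
  -- Step 1: cancel the common factor
  have heq' : (1 - q) ^ n = (Nat.choose (k * n) n : ℝ) * q ^ n := by
    have h2 : (1 - q) ^ ((k-1)*n) * (1 - q) ^ n
        = (1 - q) ^ ((k-1)*n) * ((Nat.choose (k * n) n : ℝ) * q ^ n) := by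
      rw [← pow_add, ← hkn, heq]; ring
    exact mul_left_cancel₀ (pow_ne_zero _ (ne_of_gt h1q)) h2
  -- Step 2: binomial bound  C(kn,n) * x^n < (x+1)^(kn)  with x = 1/c
  set x : ℝ := 1 / c with hx
  have hxpos : 0 < x := by positivity
  have hmemn : n ∈ Finset.range (k * n + 1) := by
    have : n ≤ k * n :=
      calc n = 1 * n := (one_mul n).symm
        _ ≤ k * n := Nat.mul_le_mul_right n (by omega)
    exact Finset.mem_range.mpr (by omega)
  have hmem0 : 0 ∈ Finset.range (k * n + 1) := Finset.mem_range.mpr (by omega)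
  have key : ((k * n).choose n : ℝ) * x ^ n < (x + 1) ^ (k * n) := by
    rw [add_pow x 1 (k * n)]
    have hlt : x ^ n * 1 ^ (k * n - n) * ((k * n).choose n : ℝ)
        < ∑ i ∈ Finset.range (k * n + 1), x ^ i * 1 ^ (k * n - i) * ((k * n).choose i : ℝ) := by
      apply Finset.single_lt_sum (f := fun i => x ^ i * 1 ^ (k * n - i) * ((k * n).choose i : ℝ))
        (by omega : (0:ℕ) ≠ n) hmemn hmem0
      · simp
      · intro i _ _; positivity
    calc ((k * n).choose n : ℝ) * x ^ n
        = x ^ n * 1 ^ (k * n - n) * ((k * n).choose n : ℝ) := by rw [one_pow]; ring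
      _ < _ := hlt
  -- Turn it into  C(kn,n) < A^n
  have hCA : ((k * n).choose n : ℝ) < A ^ n := by
    have hx1 : x + 1 = K / c := by rw [hx]; field_simp; rw [hcdef]; ring
    have hAn : A ^ n * x ^ n = (x + 1) ^ (k * n) := by
      rw [hA, hx1, hx, div_pow, div_pow, div_pow, one_pow, ← pow_mul, ← pow_mul]
      rw [div_mul_div_comm, mul_one, ← pow_add, ← hkn]
    have := hAn ▸ key
    exact (mul_lt_mul_iff_of_pos_right (pow_pos hxpos n)).mp this
  -- Step 3: conclude
  have hq' : (1 - q) ^ n < (A * q) ^ n := by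
    rw [heq', mul_pow]
    exact mul_lt_mul_of_pos_right hCA (pow_pos hq0 n)
  have hlin : 1 - q < A * q :=
    lt_of_pow_lt_pow_left₀ n (by positivity) hq'
  rw [div_lt_iff₀ (by positivity)]
  nlinarith
end

section
/- Let n ≥ 1 and k ≥ 2 be integers and let q ∈ (0,1) satisfy the equation (1−q)^{k n} = C(k n, n) · (1−q)^{(k−1)n} · q^n. Then q < 1/(1 + (4(k−1)n)^{−1/n} · k^k/(k−1)^{k−1}). -/
open Finset

lemma term_le_aux (k n : ℕ) (hn : 1 ≤ n) (hk : 2 ≤ k) (i : ℕ) :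
    (k*n).choose i * (k-1)^(k*n - i) ≤ (k*n).choose n * (k-1)^(k*n - n) := by
  set m := k*n with hm
  set c := k-1 with hc
  have hc1 : 1 ≤ c := by omega
  have hnm : n ≤ m := by
    calc n = 1*n := (one_mul n).symm
    _ ≤ k*n := Nat.mul_le_mul_right n (by omega)
  have hup : ∀ i, i < n → (m.choose i) * c^(m - i) ≤ (m.choose (i+1)) * c^(m - (i+1)) := by
    intro i hi
    have h1 : m - i = (m - (i+1)) + 1 := by omega
    rw [h1, pow_succ]
    rw [show m.choose i * (c ^ (m - (i + 1)) * c) = (m.choose i * c) * c ^ (m - (i+1)) by ring]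
    apply Nat.mul_le_mul_right
    have key : m.choose i * c * (i+1) ≤ m.choose (i+1) * (i+1) := by
      rw [Nat.choose_succ_right_eq]
      have h2 : c * (i+1) ≤ m - i := by
        have e1 : (k-1) * (i+1) = k*(i+1) - 1*(i+1) := (Nat.sub_mul k 1 (i+1))
        have e2 : k*(i+1) ≤ k*n := Nat.mul_le_mul_left k hi
        have e3 : i + 1 ≤ k*n := le_trans hi (Nat.le_mul_of_pos_left n (by omega))
        simp only [hc, hm]
        omega
      calc m.choose i * c * (i+1) = m.choose i * (c * (i+1)) := by ring
      _ ≤ m.choose i * (m - i) := Nat.mul_le_mul_left _ h2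
    exact Nat.le_of_mul_le_mul_right key (by omega)
  have hdown : ∀ i, n ≤ i → (m.choose (i+1)) * c^(m - (i+1)) ≤ (m.choose i) * c^(m - i) := by
    intro i hi
    rcases Nat.lt_or_ge i m with h1 | h1
    · have h2 : m - i = (m - (i+1)) + 1 := by omega
      rw [h2, pow_succ]
      rw [show m.choose i * (c ^ (m - (i + 1)) * c) = (m.choose i * c) * c ^ (m - (i+1)) by ring]
      apply Nat.mul_le_mul_right
      have key : m.choose (i+1) * (i+1) ≤ m.choose i * c * (i+1) := by
        rw [Nat.choose_succ_right_eq]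
        have h3 : m - i ≤ c * (i+1) := by
          have e1 : (k-1) * n = k*n - 1*n := (Nat.sub_mul k 1 n)
          have e2 : (k-1) * n ≤ (k-1) * (i+1) := Nat.mul_le_mul_left (k-1) (by omega)
          simp only [hc, hm]
          omega
        calc m.choose i * (m-i) ≤ m.choose i * (c * (i+1)) := Nat.mul_le_mul_left _ h3
        _ = m.choose i * c * (i+1) := by ring
      exact Nat.le_of_mul_le_mul_right key (by omega)
    · rw [Nat.choose_eq_zero_of_lt (by omega)]
      simp
  have hbelow : ∀ j, (m.choose (n - j)) * c^(m - (n-j)) ≤ (m.choose n) * c^(m - n) := by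
    intro j
    induction j with
    | zero => simp
    | succ j ih =>
      rcases le_or_gt n j with h | h
      · have h2 : n - (j+1) = n - j := by omega
        rw [h2]; exact ih
      · have h2 : n - j = (n - (j+1)) + 1 := by omega
        calc (m.choose (n - (j+1))) * c^(m - (n-(j+1)))
            ≤ (m.choose (n - (j+1) + 1)) * c^(m - (n-(j+1)+1)) := hup _ (by omega)
          _ = (m.choose (n - j)) * c^(m - (n-j)) := by rw [h2]
          _ ≤ _ := ih
  have habove : ∀ j, (m.choose (n + j)) * c^(m - (n+j)) ≤ (m.choose n) * c^(m - n) := by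
    intro j
    induction j with
    | zero => simp
    | succ j ih =>
      have h2 : n + (j+1) = (n+j) + 1 := by omega
      calc (m.choose (n + (j+1))) * c^(m - (n+(j+1)))
          = (m.choose ((n+j)+1)) * c^(m - ((n+j)+1)) := by rw [h2]
        _ ≤ (m.choose (n + j)) * c^(m - (n+j)) := hdown _ (by omega)
        _ ≤ _ := ih
  rcases le_or_gt i n with h | h
  · have := hbelow (n - i)
    rwa [Nat.sub_sub_self h] at this
  · have := habove (i - n)
    rwa [Nat.add_sub_cancel' (le_of_lt h)] at this

lemma pow_le_choose_aux (k n : ℕ) (hn : 1 ≤ n) (hk : 2 ≤ k) :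
    k ^ (k*n) ≤ (k*n + 1) * ((k*n).choose n * (k-1)^(k*n - n)) := by
  set m := k*n with hm
  have h : k ^ m = ∑ i ∈ range (m+1), (k-1)^(m-i) * (m.choose i) := by
    have h1 : ((1:ℕ) + (k-1)) ^ m = ∑ i ∈ range (m+1), 1^i * (k-1)^(m-i) * (m.choose i) :=
      add_pow 1 (k-1) m
    have h2 : (1:ℕ) + (k-1) = k := by omega
    rw [h2] at h1
    simpa using h1
  rw [h]
  calc ∑ i ∈ range (m+1), (k-1)^(m-i) * (m.choose i)
      ≤ ∑ _i ∈ range (m+1), (m.choose n * (k-1)^(m - n)) := by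
        apply Finset.sum_le_sum
        intro i _
        rw [mul_comm]
        exact term_le_aux k n hn hk i
    _ = (m + 1) * (m.choose n * (k-1)^(m - n)) := by
        rw [Finset.sum_const, card_range, smul_eq_mul]

/-- If `q ∈ (0,1)` satisfies `(1−q)^(kn) = C(kn, n) · (1−q)^((k−1)n) · q^n`
for integers `n ≥ 1`, `k ≥ 2`, then
`q < 1/(1 + (4(k−1)n)^(−1/n) · k^k/(k−1)^(k−1))`. -/
theorem q_upper_bound (n k : ℕ) (hn : 1 ≤ n) (hk : 2 ≤ k) (q : ℝ)
    (hq0 : 0 < q) (hq1 : q < 1)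
    (heq : (1 - q) ^ (k * n) =
      (Nat.choose (k * n) n : ℝ) * (1 - q) ^ ((k - 1) * n) * q ^ n) :
    q < 1 / (1 + (4 * ((k : ℝ) - 1) * n) ^ (-(1 : ℝ) / n) *
      ((k : ℝ) ^ k / ((k : ℝ) - 1) ^ (k - 1))) := by
  have hq1' : 0 < 1 - q := by linarith
  have hn0 : (0:ℝ) < n := by exact_mod_cast hn
  have hk1 : (1:ℝ) < k := by exact_mod_cast hk
  have hkm1 : (0:ℝ) < (k:ℝ) - 1 := by linarith
  have hk2 : (2:ℝ) ≤ (k:ℝ) := by exact_mod_cast hk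
  have hn1 : (1:ℝ) ≤ (n:ℝ) := by exact_mod_cast hn
  set C : ℝ := (Nat.choose (k * n) n : ℝ) with hC
  have hCpos : 0 < C := by
    have h0 : 0 < Nat.choose (k*n) n :=
      Nat.choose_pos (Nat.le_mul_of_pos_left n (by omega))
    simp only [hC]
    exact_mod_cast h0
  -- from heq: ((1-q)/q)^n = C
  have hsplit : k * n = (k-1) * n + n := by
    have e1 : (k-1) * n = k*n - 1*n := (Nat.sub_mul k 1 n)
    have e3 : n ≤ k*n := Nat.le_mul_of_pos_left n (by omega)
    omega
  have heq2 : (1 - q) ^ n = C * q ^ n := by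
    have h1 : (1-q) ^ ((k-1)*n) * (1-q)^n = (1-q) ^ ((k-1)*n) * (C * q^n) := by
      rw [← pow_add, ← hsplit]
      rw [heq]; ring
    have h2 : (1-q) ^ ((k-1)*n) ≠ 0 := pow_ne_zero _ (ne_of_gt hq1')
    exact mul_left_cancel₀ h2 h1
  have hratio : ((1 - q) / q) ^ n = C := by
    rw [div_pow, heq2]
    field_simp
  -- key numeric bound
  set b : ℝ := 4 * ((k:ℝ) - 1) * n with hb
  have hbpos : 0 < b := by positivity
  set A : ℝ := b ^ (-(1:ℝ)/n) * ((k:ℝ)^k / ((k:ℝ)-1)^(k-1)) with hA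
  have hApos : 0 < A := by
    apply mul_pos (Real.rpow_pos_of_pos hbpos _)
    positivity
  -- cast of nat bound
  have hcast : ((k:ℝ))^(k*n) ≤ ((k:ℝ)*n + 1) * (C * ((k:ℝ)-1)^((k-1)*n)) := by
    have := pow_le_choose_aux k n hn hk
    have hcast1 : ((k-1 : ℕ) : ℝ) = (k:ℝ) - 1 := by
      have : 1 ≤ k := by omega
      push_cast [this]; ring
    have hkn : k*n - n = (k-1)*n := by
      have e1 : (k-1) * n = k*n - 1*n := (Nat.sub_mul k 1 n)
      omega
    calc ((k:ℝ))^(k*n) = ((k ^ (k*n) : ℕ) : ℝ) := by push_cast; ring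
      _ ≤ (((k*n + 1) * ((k*n).choose n * (k-1)^(k*n - n)) : ℕ) : ℝ) := by
          exact_mod_cast this
      _ = ((k:ℝ)*n + 1) * (C * ((k:ℝ)-1)^((k-1)*n)) := by
          rw [hkn]; push_cast [hcast1]; ring
  have hAn : A ^ n < C := by
    have hrw : (b ^ (-(1:ℝ)/n)) ^ n = b⁻¹ := by
      rw [← Real.rpow_natCast (b ^ (-(1:ℝ)/n)) n, ← Real.rpow_mul hbpos.le]
      have : (-(1:ℝ)/n) * n = -1 := by
        field_simp
      rw [this, Real.rpow_neg_one]
    have hAn2 : A ^ n = b⁻¹ * ((k:ℝ)^(k*n) / ((k:ℝ)-1)^((k-1)*n)) := by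
      rw [hA, mul_pow, hrw, div_pow, ← pow_mul, ← pow_mul]
    rw [hAn2]
    rw [inv_mul_lt_iff₀ hbpos, div_lt_iff₀ (by positivity)]
    have hlt : (k:ℝ)*n + 1 < b := by
      rw [hb]
      have h3 : (2:ℝ) ≤ 3 * (k:ℝ) - 4 := by linarith
      have h4 : 2 * (n:ℝ) ≤ (3 * (k:ℝ) - 4) * n := mul_le_mul_of_nonneg_right h3 (le_of_lt hn0)
      nlinarith [h4, hn1]
    calc ((k:ℝ))^(k*n) ≤ ((k:ℝ)*n + 1) * (C * ((k:ℝ)-1)^((k-1)*n)) := hcast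
      _ < b * (C * ((k:ℝ)-1)^((k-1)*n)) := by
          apply mul_lt_mul_of_pos_right hlt
          positivity
      _ = b * C * ((k:ℝ)-1)^((k-1)*n) := by ring
  -- conclude A < (1-q)/q
  have hAq : A < (1 - q) / q := by
    have hq : 0 ≤ (1-q)/q := by positivity
    apply lt_of_pow_lt_pow_left₀ n hq
    rw [hratio]
    exact hAn
  have h1q : 1 + A < 1 / q := by
    have : (1-q)/q = 1/q - 1 := by field_simp
    linarith [hAq, this ▸ hAq]
  have hfin : q < 1 / (1 + A) := by
    have h0 : 0 < 1 + A := by linarith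
    have := one_div_lt_one_div_of_lt h0 h1q
    rwa [one_div_one_div] at this
  exact hfin
end

section
/- Let n ≥ 1 and k > 2 be integers, and let q ∈ (0,1) satisfy (1−q)^{k n} = C(k n, n) · (1−q)^{(k−1)n} · q^n, with n sufficiently large. Then the probability Q that a Binomial(k n, q) random variable takes a value divisible by n, namely Q = Σ_{i=0}^{k} C(k n, i n) q^{i n} (1−q)^{(k−i)n}, satisfies Q < (k+1)(1−q)^{k n}. -/
private lemma choose_step (k n i : ℕ) (h : (i + 1) * n ≤ k * n) :
    Nat.choose (k * n) ((i + 1) * n) ≤ Nat.choose (k * n) (i * n) * Nat.choose (k * n) n := by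
  have hn1 : n ≤ (i + 1) * n := Nat.le_mul_of_pos_left n (by omega)
  have hid := Nat.choose_mul (n := k * n) (k := (i + 1) * n) (s := n) hn1
  have hsub : (i + 1) * n - n = i * n := by ring_nf; omega
  rw [hsub] at hid
  have h1 : 1 ≤ Nat.choose ((i + 1) * n) n := Nat.choose_pos hn1
  calc Nat.choose (k * n) ((i + 1) * n)
      ≤ Nat.choose (k * n) ((i + 1) * n) * Nat.choose ((i + 1) * n) n :=
        Nat.le_mul_of_pos_right _ h1
    _ = Nat.choose (k * n) n * Nat.choose (k * n - n) (i * n) := hid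
    _ ≤ Nat.choose (k * n) n * Nat.choose (k * n) (i * n) :=
        Nat.mul_le_mul_left _ (Nat.choose_le_choose _ (Nat.sub_le _ _))
    _ = Nat.choose (k * n) (i * n) * Nat.choose (k * n) n := Nat.mul_comm _ _

private lemma choose_base (k n : ℕ) (hn : 1 ≤ n) (h : 2 * n ≤ k * n) :
    Nat.choose (k * n) (2 * n) < Nat.choose (k * n) n ^ 2 := by
  have hn1 : n ≤ 2 * n := by omega
  have hid := Nat.choose_mul (n := k * n) (k := 2 * n) (s := n) hn1
  have hsub : 2 * n - n = n := by omega
  rw [hsub] at hid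
  -- C(2n, n) ≥ 2
  have h2 : 2 ≤ Nat.choose (2 * n) n := by
    obtain ⟨m, rfl⟩ : ∃ m, n = m + 1 := ⟨n - 1, by omega⟩
    have e : 2 * (m + 1) = (2 * m + 1) + 1 := by ring
    rw [e, Nat.choose_succ_succ]
    have p1 : 0 < Nat.choose (2 * m + 1) m := Nat.choose_pos (by omega)
    have p2 : 0 < Nat.choose (2 * m + 1) (m + 1) := Nat.choose_pos (by omega)
    simp only [Nat.succ_eq_add_one]
    omega
  have hp : 0 < Nat.choose (k * n) (2 * n) := Nat.choose_pos h
  have hle : Nat.choose (k * n) (2 * n) * 2 ≤ Nat.choose (k * n) n ^ 2 := by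
    calc Nat.choose (k * n) (2 * n) * 2
        ≤ Nat.choose (k * n) (2 * n) * Nat.choose (2 * n) n := Nat.mul_le_mul_left _ h2
      _ = Nat.choose (k * n) n * Nat.choose (k * n - n) n := hid
      _ ≤ Nat.choose (k * n) n * Nat.choose (k * n) n :=
          Nat.mul_le_mul_left _ (Nat.choose_le_choose _ (Nat.sub_le _ _))
      _ = Nat.choose (k * n) n ^ 2 := (sq _).symm
  omega

private lemma choose_lt_pow (k n : ℕ) (hn : 1 ≤ n) :
    ∀ i, 2 ≤ i → i ≤ k → Nat.choose (k * n) (i * n) < Nat.choose (k * n) n ^ i := by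
  intro i
  induction i with
  | zero => omega
  | succ j ih =>
    intro h2 hk
    rcases Nat.lt_or_ge j 2 with hj | hj
    · -- j + 1 = 2
      have : j = 1 := by omega
      subst this
      exact choose_base k n hn (Nat.mul_le_mul_right n hk)
    · have hjk : j ≤ k := by omega
      have hstep := choose_step k n j (Nat.mul_le_mul_right n hk)
      have hlt := ih hj hjk
      have hCpos : 0 < Nat.choose (k * n) n := Nat.choose_pos (Nat.le_mul_of_pos_left n (by omega))
      calc Nat.choose (k * n) ((j + 1) * n)
          ≤ Nat.choose (k * n) (j * n) * Nat.choose (k * n) n := hstep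
        _ < Nat.choose (k * n) n ^ j * Nat.choose (k * n) n :=
            (Nat.mul_lt_mul_right hCpos).mpr hlt
        _ = Nat.choose (k * n) n ^ (j + 1) := (pow_succ _ _).symm

/-- For integers `k > 2` and `n ≥ 1` sufficiently large, if `q ∈ (0,1)` satisfies
`(1−q)^(kn) = C(kn, n) · (1−q)^((k−1)n) · q^n`, then
`Q = Σ_{i=0}^{k} C(kn, in) q^(in) (1−q)^((k−i)n)` satisfies `Q < (k+1)(1−q)^(kn)`. -/
theorem Q_upper_bound (k : ℕ) (hk : 2 < k) :
    ∃ n₀ : ℕ, ∀ n : ℕ, n₀ ≤ n → 1 ≤ n → ∀ q : ℝ, 0 < q → q < 1 →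
      (1 - q) ^ (k * n) =
        (Nat.choose (k * n) n : ℝ) * (1 - q) ^ ((k - 1) * n) * q ^ n →
      ∑ i ∈ Finset.range (k + 1),
          (Nat.choose (k * n) (i * n) : ℝ) * q ^ (i * n) * (1 - q) ^ ((k - i) * n)
        < ((k : ℝ) + 1) * (1 - q) ^ (k * n) := by
  refine ⟨1, fun n _ hn q hq hq1 hyp => ?_⟩
  have h1q : (0:ℝ) < 1 - q := by linarith
  set C : ℝ := (Nat.choose (k * n) n : ℝ) with hC
  -- derive (1-q)^n = C * q^n
  have hsplit : k * n = n + (k - 1) * n := by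
    have : k = 1 + (k - 1) := by omega
    nth_rewrite 1 [this]; ring
  have hkey : (1 - q) ^ n = C * q ^ n := by
    have h := hyp
    rw [hsplit, pow_add] at h
    have hpos : (0:ℝ) < (1 - q) ^ ((k - 1) * n) := pow_pos h1q _
    apply mul_right_cancel₀ (ne_of_gt hpos)
    linear_combination h
  -- each term bound
  have hterm_le : ∀ i ∈ Finset.range (k + 1),
      (Nat.choose (k * n) (i * n) : ℝ) * q ^ (i * n) * (1 - q) ^ ((k - i) * n)
        ≤ (1 - q) ^ (k * n) := by
    intro i hi
    have hik : i ≤ k := by simpa using Nat.lt_succ_iff.mp (Finset.mem_range.mp hi)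
    have hdecomp : k * n = i * n + (k - i) * n := by
      have : k = i + (k - i) := by omega
      nth_rewrite 1 [this]; ring
    conv_rhs => rw [hdecomp, pow_add]
    have hin : (1 - q) ^ (i * n) = C ^ i * q ^ (i * n) := by
      rw [mul_comm i n, pow_mul, hkey, mul_pow, ← pow_mul, mul_comm n i]
    rw [hin]
    have hCi : (Nat.choose (k * n) (i * n) : ℝ) ≤ C ^ i := by
      rw [hC, ← Nat.cast_pow, Nat.cast_le]
      rcases Nat.lt_or_ge i 2 with h2 | h2
      · interval_cases i <;> simp
      · exact le_of_lt (choose_lt_pow k n hn i h2 hik)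
    have hqpos : (0:ℝ) < q ^ (i * n) := pow_pos hq _
    have hpowpos : (0:ℝ) < (1 - q) ^ ((k - i) * n) := pow_pos h1q _
    calc (Nat.choose (k * n) (i * n) : ℝ) * q ^ (i * n) * (1 - q) ^ ((k - i) * n)
        ≤ C ^ i * q ^ (i * n) * (1 - q) ^ ((k - i) * n) :=
          mul_le_mul_of_nonneg_right (mul_le_mul_of_nonneg_right hCi hqpos.le) hpowpos.le
      _ = C ^ i * q ^ (i * n) * (1 - q) ^ ((k - i) * n) := rfl
  have hterm_lt :
      (Nat.choose (k * n) (2 * n) : ℝ) * q ^ (2 * n) * (1 - q) ^ ((k - 2) * n)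
        < (1 - q) ^ (k * n) := by
    have hdecomp : k * n = 2 * n + (k - 2) * n := by
      have : k = 2 + (k - 2) := by omega
      nth_rewrite 1 [this]; ring
    conv_rhs => rw [hdecomp, pow_add]
    have hin : (1 - q) ^ (2 * n) = C ^ 2 * q ^ (2 * n) := by
      rw [mul_comm 2 n, pow_mul, hkey, mul_pow, ← pow_mul, mul_comm n 2]
    rw [hin]
    have hCi : (Nat.choose (k * n) (2 * n) : ℝ) < C ^ 2 := by
      rw [hC, ← Nat.cast_pow, Nat.cast_lt]
      exact choose_lt_pow k n hn 2 le_rfl (le_of_lt hk)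
    have hqpos : (0:ℝ) < q ^ (2 * n) := pow_pos hq _
    have hpowpos : (0:ℝ) < (1 - q) ^ ((k - 2) * n) := pow_pos h1q _
    exact mul_lt_mul_of_pos_right (mul_lt_mul_of_pos_right hCi hqpos) hpowpos
  have h2mem : 2 ∈ Finset.range (k + 1) := Finset.mem_range.mpr (by omega)
  calc ∑ i ∈ Finset.range (k + 1),
          (Nat.choose (k * n) (i * n) : ℝ) * q ^ (i * n) * (1 - q) ^ ((k - i) * n)
      < ∑ _i ∈ Finset.range (k + 1), (1 - q) ^ (k * n) :=
        Finset.sum_lt_sum hterm_le ⟨2, h2mem, hterm_lt⟩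
    _ = ((k : ℝ) + 1) * (1 - q) ^ (k * n) := by
        rw [Finset.sum_const, Finset.card_range, nsmul_eq_mul]
        push_cast; ring
end

section
/- Let n, r, k, N be positive integers with k n ≤ N, and let q ∈ (0,1). Define Q = Σ_{i=0}^{k} C(k n, i n) q^{i n} (1−q)^{(k−i)n}. If C(N, k n) · Q^r < 1, then there exists a sequence of N elements of (ℤ/nℤ)^r, each with all coordinates in {0, 1}, that contains no subsequence of length k n summing to zero; in particular s_{kn}(C_n^r) > N. -/
open Finset

lemma sum_pi_prod {ι C : Type*} [Fintype ι] [DecidableEq ι] [Fintype C] (g : ι → C → ℝ) :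
    ∑ f : ι → C, ∏ i, g i (f i) = ∏ i, ∑ c, g i c := by
  rw [Finset.prod_univ_sum, Fintype.piFinset_univ]

-- per-column lemma over a general fintype of card k*n
lemma colsum (n k : ℕ) (hn : 0 < n) (q : ℝ) (ι : Type*) [Fintype ι] [DecidableEq ι]
    (hcard : Fintype.card ι = k * n) :
    ∑ c : ι → Bool, (∏ i, (if c i then q else 1 - q)) *
      (if (∑ i, (if c i then (1 : ZMod n) else 0)) = 0 then (1:ℝ) else 0)
    = ∑ i ∈ Finset.range (k + 1),
        (Nat.choose (k * n) (i * n) : ℝ) * q ^ (i * n) * (1 - q) ^ ((k - i) * n) := by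
  haveI : NeZero n := ⟨hn.ne'⟩
  -- step 1: reindex by the set of true coordinates
  have h1 : ∑ c : ι → Bool, (∏ i, (if c i then q else 1 - q)) *
      (if (∑ i, (if c i then (1 : ZMod n) else 0)) = 0 then (1:ℝ) else 0)
      = ∑ t ∈ (univ : Finset ι).powerset,
          (if n ∣ t.card then q ^ t.card * (1 - q) ^ (k * n - t.card) else 0) := by
    apply Finset.sum_nbij' (i := fun c => univ.filter (fun i => c i = true))
      (j := fun t => fun i => decide (i ∈ t))
    · intro c _; simp
    · intro t _; simp
    · intro c _; funext i; simp
    · intro t _; ext i; simp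
    · intro c _
      have hprod : (∏ i, (if c i then q else 1 - q))
          = q ^ (univ.filter (fun i => c i = true)).card *
            (1 - q) ^ (k * n - (univ.filter (fun i => c i = true)).card) := by
        rw [← Finset.prod_filter_mul_prod_filter_not univ (fun i => c i = true)]
        have h2 : ∀ i ∈ univ.filter (fun i => c i = true), (if c i then q else 1-q) = q := by
          intro i hi; simp at hi; simp [hi]
        have h3 : ∀ i ∈ univ.filter (fun i => ¬ c i = true), (if c i then q else 1-q) = 1-q := by
          intro i hi; simp at hi; simp [hi]
        rw [Finset.prod_congr rfl h2, Finset.prod_congr rfl h3, Finset.prod_const,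
          Finset.prod_const]
        congr 1
        rw [Finset.filter_not, Finset.card_sdiff_of_subset (Finset.filter_subset _ _),
          Finset.card_univ, hcard]
      have hsum : (∑ i, (if c i then (1 : ZMod n) else 0))
          = ((univ.filter (fun i => c i = true)).card : ZMod n) := by
        rw [Finset.sum_boole]
      rw [hprod, hsum]
      by_cases h : ((univ.filter (fun i => c i = true)).card : ZMod n) = 0
      · rw [if_pos h, if_pos ((ZMod.natCast_eq_zero_iff _ n).mp h), mul_one]
      · rw [if_neg h, if_neg (fun hd => h ((ZMod.natCast_eq_zero_iff _ n).mpr hd)),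
          mul_zero]
  rw [h1, Finset.sum_powerset]
  -- step 2
  have h2 : ∀ j ∈ Finset.range ((univ : Finset ι).card + 1),
      ∑ t ∈ powersetCard j (univ : Finset ι),
        (if n ∣ t.card then q ^ t.card * (1 - q) ^ (k * n - t.card) else 0)
      = (Nat.choose (k*n) j : ℝ) * (if n ∣ j then q ^ j * (1 - q) ^ (k * n - j) else 0) := by
    intro j _
    rw [Finset.sum_congr rfl (fun t ht => by
      rw [(Finset.mem_powersetCard.mp ht).2]), Finset.sum_const, Finset.card_powersetCard,
      Finset.card_univ, hcard, nsmul_eq_mul]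
  rw [Finset.sum_congr rfl h2, Finset.card_univ, hcard]
  -- step 3: reindex multiples of n
  rw [← Finset.sum_filter_add_sum_filter_not (Finset.range (k*n+1)) (fun j => n ∣ j)]
  have h4 : ∑ j ∈ (Finset.range (k*n+1)).filter (fun j => ¬ n ∣ j),
      (Nat.choose (k*n) j : ℝ) * (if n ∣ j then q ^ j * (1 - q) ^ (k * n - j) else 0) = 0 := by
    apply Finset.sum_eq_zero; intro j hj
    simp only [Finset.mem_filter] at hj
    rw [if_neg hj.2, mul_zero]
  rw [h4, add_zero]
  apply Finset.sum_nbij' (i := fun j => j / n) (j := fun i => i * n)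
  · intro j hj
    simp only [Finset.mem_filter, Finset.mem_range] at hj ⊢
    obtain ⟨hj1, c, rfl⟩ := hj
    rw [Nat.mul_div_cancel_left _ hn]
    have h' : n * c ≤ n * k := by rw [Nat.mul_comm n k]; omega
    exact Nat.lt_succ_of_le (Nat.le_of_mul_le_mul_left h' hn)
  · intro i hi
    simp only [Finset.mem_filter, Finset.mem_range] at hi ⊢
    have hik : i ≤ k := by omega
    exact ⟨Nat.lt_succ_of_le (Nat.mul_le_mul_right n hik), dvd_mul_left n i⟩
  · intro j hj
    simp only [Finset.mem_filter] at hj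
    exact Nat.div_mul_cancel hj.2
  · intro i _
    exact Nat.mul_div_cancel _ hn
  · intro j hj
    simp only [Finset.mem_filter, Finset.mem_range] at hj
    obtain ⟨hj1, c, rfl⟩ := hj
    have hc : c ≤ k := by
      have h' : n * c ≤ n * k := by rw [Nat.mul_comm n k]; omega
      exact Nat.le_of_mul_le_mul_left h' hn
    rw [Nat.mul_div_cancel_left _ hn, if_pos (Dvd.intro c rfl), Nat.sub_mul, Nat.mul_comm n c]
    ring

lemma col_one {κ : Type*} [Fintype κ] [DecidableEq κ] (q : ℝ) :
    ∑ v : κ → Bool, ∏ j, (if v j then q else 1 - q) = 1 := by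
  rw [sum_pi_prod (g := fun (j : κ) (c : Bool) => if c then q else 1 - q)]
  have h : ∀ j : κ, ∑ c : Bool, (if c then q else 1 - q) = 1 := by
    intro j; simp
  rw [Finset.prod_congr rfl (fun j _ => h j), Finset.prod_const_one]

lemma wt_one {ι κ : Type*} [Fintype ι] [DecidableEq ι] [Fintype κ] [DecidableEq κ] (q : ℝ) :
    ∑ f : ι → κ → Bool, ∏ i, ∏ j, (if f i j then q else 1 - q) = 1 := by
  rw [sum_pi_prod (g := fun (i : ι) (v : κ → Bool) => ∏ j, if v j then q else 1 - q)]
  rw [Finset.prod_congr rfl (fun i _ => col_one q), Finset.prod_const_one]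

lemma key (n k N r : ℕ) (hn : 0 < n) (q : ℝ) (s : Finset (Fin N)) (hs : s.card = k * n) :
    ∑ f : Fin N → Fin r → Bool,
      (∏ i, ∏ j, (if f i j then q else 1 - q)) *
      (if ∀ j, (∑ i ∈ s, (if f i j then (1 : ZMod n) else 0)) = 0 then (1:ℝ) else 0)
    = (∑ i ∈ Finset.range (k + 1),
        (Nat.choose (k * n) (i * n) : ℝ) * q ^ (i * n) * (1 - q) ^ ((k - i) * n)) ^ r := by
  set Q : ℝ := ∑ i ∈ Finset.range (k + 1),
        (Nat.choose (k * n) (i * n) : ℝ) * q ^ (i * n) * (1 - q) ^ ((k - i) * n) with hQ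
  set F : (Fin N → Fin r → Bool) → ℝ := fun f =>
      (∏ i, ∏ j, (if f i j then q else 1 - q)) *
      (if ∀ j, (∑ i ∈ s, (if f i j then (1 : ZMod n) else 0)) = 0 then (1:ℝ) else 0) with hFdef
  let e := (Equiv.piEquivPiSubtypeProd (fun i : Fin N => i ∈ s)
      (fun _ => Fin r → Bool)).symm
  rw [show ∑ f : Fin N → Fin r → Bool, F f = ∑ p, F (e p) from (Equiv.sum_comp e F).symm]
  rw [Fintype.sum_prod_type]
  set A : ({x : Fin N // x ∈ s} → Fin r → Bool) → ℝ := fun a =>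
      (∏ i, ∏ j, (if a i j then q else 1 - q)) *
        (if ∀ j, (∑ i : {x : Fin N // x ∈ s}, (if a i j then (1 : ZMod n) else 0)) = 0
          then (1:ℝ) else 0) with hAdef
  have hF : ∀ (a : {x : Fin N // x ∈ s} → Fin r → Bool)
      (b : {x : Fin N // ¬ x ∈ s} → Fin r → Bool),
      F (e (a, b)) = A a * (∏ i, ∏ j, (if b i j then q else 1 - q)) := by
    intro a b
    have huniv : ∀ (inst1 inst2 : Fintype {x : Fin N // x ∈ s}),
        @univ _ inst1 = @univ _ inst2 := fun i1 i2 => by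
      congr 1; exact Subsingleton.elim _ _
    have he : ∀ i : Fin N, e (a, b) i = if h : i ∈ s then a ⟨i, h⟩ else b ⟨i, h⟩ := by
      intro i; rfl
    have hprod : (∏ i, ∏ j, (if e (a, b) i j then q else 1 - q)) =
        (∏ i, ∏ j, (if a i j then q else 1 - q)) *
        (∏ i, ∏ j, (if b i j then q else 1 - q)) := by
      rw [← Fintype.prod_subtype_mul_prod_subtype (fun i : Fin N => i ∈ s)
        (fun i => ∏ j, (if e (a, b) i j then q else 1 - q))]
      congr 1
      · exact Finset.prod_congr (huniv _ _) fun i _ => by rw [he i.1, dif_pos i.2]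
      · exact Finset.prod_congr rfl fun i _ => by rw [he i.1, dif_neg i.2]
    have hsum : ∀ j, (∑ i ∈ s, (if e (a, b) i j then (1 : ZMod n) else 0)) =
        ∑ i : {x : Fin N // x ∈ s}, (if a i j then (1 : ZMod n) else 0) := by
      intro j
      rw [← Finset.sum_coe_sort s (fun i => if e (a, b) i j then (1 : ZMod n) else 0)]
      exact Finset.sum_congr (huniv _ _) fun i _ => by rw [he i.1, dif_pos i.2]
    simp only [hFdef, hAdef, hprod, hsum]
    ring
  rw [Finset.sum_congr rfl (fun a _ => Finset.sum_congr rfl (fun b _ => hF a b))]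
  have hb1 : ∀ a : {x : Fin N // x ∈ s} → Fin r → Bool,
      (∑ b : {x : Fin N // ¬ x ∈ s} → Fin r → Bool,
        A a * (∏ i, ∏ j, (if b i j then q else 1 - q))) = A a := by
    intro a
    rw [← Finset.mul_sum, wt_one q, mul_one]
  rw [Finset.sum_congr rfl (fun a _ => hb1 a)]
  -- now ∑ a, A a = Q ^ r
  let e2 : (Fin r → {x : Fin N // x ∈ s} → Bool) ≃ ({x : Fin N // x ∈ s} → Fin r → Bool) :=
    Equiv.piComm _
  rw [show ∑ a, A a = ∑ c, A (e2 c) from (Equiv.sum_comp e2 A).symm]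
  have hA : ∀ c : Fin r → {x : Fin N // x ∈ s} → Bool,
      A (e2 c) = ∏ j, ((∏ i, (if c j i then q else 1 - q)) *
        (if (∑ i : {x : Fin N // x ∈ s}, (if c j i then (1 : ZMod n) else 0)) = 0
          then (1:ℝ) else 0)) := by
    intro c
    have h1 : A (e2 c) = (∏ i, ∏ j, (if c j i then q else 1 - q)) *
        (if ∀ j, (∑ i : {x : Fin N // x ∈ s}, (if c j i then (1 : ZMod n) else 0)) = 0
          then (1:ℝ) else 0) := rfl
    rw [h1, Finset.prod_comm, Finset.prod_mul_distrib]
    congr 1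
    rw [Finset.prod_boole]
    simp
  rw [Finset.sum_congr rfl (fun c _ => hA c)]
  rw [sum_pi_prod (g := fun (j : Fin r) (d : {x : Fin N // x ∈ s} → Bool) =>
    (∏ i, (if d i then q else 1 - q)) *
      (if (∑ i : {x : Fin N // x ∈ s}, (if d i then (1 : ZMod n) else 0)) = 0
        then (1:ℝ) else 0))]
  have hcol : ∀ j : Fin r, (∑ d : {x : Fin N // x ∈ s} → Bool,
      (∏ i, (if d i then q else 1 - q)) *
      (if (∑ i : {x : Fin N // x ∈ s}, (if d i then (1 : ZMod n) else 0)) = 0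
        then (1:ℝ) else 0)) = Q := by
    intro j
    exact colsum n k hn q _ (by rw [Fintype.card_coe, hs])
  rw [Finset.prod_congr rfl (fun j _ => hcol j), Finset.prod_const, Finset.card_univ,
    Fintype.card_fin]


/-- The generalized Erdős–Ginzburg–Ziv constant `s_m(G)`: the minimal `N` such that
every sequence of `N` elements of `G` contains a subsequence of length `m`
whose sum is zero. -/
noncomputable def EGZConst (G : Type*) [AddCommGroup G] (m : ℕ) : ℕ :=
  sInf {N : ℕ | ∀ f : Fin N → G, ∃ s : Finset (Fin N), s.card = m ∧ ∑ i ∈ s, f i = 0}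

/-- First-moment step: if `C(N, kn) · Q^r < 1` where
`Q = Σ_{i=0}^{k} C(kn, in) q^(in) (1−q)^((k−i)n)`, then there is a sequence of `N`
elements of `(ℤ/nℤ)^r` with all coordinates in `{0,1}` and no zero-sum subsequence
of length `kn`; in particular `s_{kn}(C_n^r) > N`. -/
theorem first_moment_step (n r k N : ℕ) (hn : 0 < n) (hr : 0 < r) (hk : 0 < k)
    (hN : 0 < N) (hkN : k * n ≤ N) (q : ℝ) (hq0 : 0 < q) (hq1 : q < 1)
    (hE : (Nat.choose N (k * n) : ℝ) *
        (∑ i ∈ Finset.range (k + 1),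
          (Nat.choose (k * n) (i * n) : ℝ) * q ^ (i * n) * (1 - q) ^ ((k - i) * n)) ^ r
      < 1) :
    (∃ f : Fin N → (Fin r → ZMod n),
        (∀ i j, f i j = 0 ∨ f i j = 1) ∧
        ¬ ∃ s : Finset (Fin N), s.card = k * n ∧ ∑ i ∈ s, f i = 0) ∧
    N < EGZConst (Fin r → ZMod n) (k * n) := by
  haveI : NeZero n := ⟨hn.ne'⟩
  set Q : ℝ := ∑ i ∈ Finset.range (k + 1),
        (Nat.choose (k * n) (i * n) : ℝ) * q ^ (i * n) * (1 - q) ^ ((k - i) * n) with hQ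
  -- existence of a good boolean array
  have hex : ∃ f0 : Fin N → Fin r → Bool, ∀ s : Finset (Fin N), s.card = k * n →
      ¬ (∀ j, (∑ i ∈ s, (if f0 i j then (1 : ZMod n) else 0)) = 0) := by
    by_contra hcon
    push_neg at hcon
    set w : (Fin N → Fin r → Bool) → ℝ := fun f => ∏ i, ∏ j, (if f i j then q else 1 - q)
      with hw
    have hwpos : ∀ f, 0 < w f := fun f =>
      Finset.prod_pos fun i _ => Finset.prod_pos fun j _ => by split <;> linarith
    set B := Finset.powersetCard (k * n) (univ : Finset (Fin N)) with hB
    set ind : Finset (Fin N) → (Fin N → Fin r → Bool) → ℝ := fun s f =>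
      (if ∀ j, (∑ i ∈ s, (if f i j then (1 : ZMod n) else 0)) = 0 then (1:ℝ) else 0)
      with hind
    have hEsum : ∑ f : Fin N → Fin r → Bool, ∑ s ∈ B, w f * ind s f
        = (Nat.choose N (k * n) : ℝ) * Q ^ r := by
      rw [Finset.sum_comm]
      have h1 : ∀ s ∈ B, (∑ f : Fin N → Fin r → Bool, w f * ind s f) = Q ^ r := by
        intro s hsB
        exact key n k N r hn q s (Finset.mem_powersetCard_univ.mp hsB)
      rw [Finset.sum_congr rfl h1, Finset.sum_const, hB, Finset.card_powersetCard,
        Finset.card_univ, Fintype.card_fin, nsmul_eq_mul]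
    have hge : (1:ℝ) ≤ ∑ f : Fin N → Fin r → Bool, ∑ s ∈ B, w f * ind s f := by
      have h2 : ∀ f : Fin N → Fin r → Bool, w f ≤ ∑ s ∈ B, w f * ind s f := by
        intro f
        obtain ⟨s, hs1, hs2⟩ := hcon f
        have hmem : s ∈ B := Finset.mem_powersetCard_univ.mpr hs1
        have hval : w f * ind s f = w f := by
          rw [hind]; simp only [if_pos hs2, mul_one]
        have hind_nonneg : ∀ t, (0:ℝ) ≤ ind t f := by
          intro t; simp only [hind]; split <;> norm_num
        calc w f = w f * ind s f := hval.symm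
          _ ≤ ∑ t ∈ B, w f * ind t f := Finset.single_le_sum
              (f := fun t => w f * ind t f)
              (fun t _ => mul_nonneg (hwpos f).le (hind_nonneg t)) hmem
      calc (1:ℝ) = ∑ f : Fin N → Fin r → Bool, w f := (wt_one q).symm
        _ ≤ _ := Finset.sum_le_sum fun f _ => h2 f
    rw [hEsum] at hge
    linarith
  obtain ⟨f0, hf0⟩ := hex
  set f : Fin N → Fin r → ZMod n := fun i j => if f0 i j then 1 else 0 with hfdef
  have hgood : ¬ ∃ s : Finset (Fin N), s.card = k * n ∧ ∑ i ∈ s, f i = 0 := by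
    rintro ⟨s, hs1, hs2⟩
    refine hf0 s hs1 fun j => ?_
    have := congrFun hs2 j
    rw [Finset.sum_apply] at this
    exact this
  have hS : ∀ M : ℕ, (∀ g : Fin M → (Fin r → ZMod n),
      ∃ s : Finset (Fin M), s.card = k * n ∧ ∑ i ∈ s, g i = 0) → M ≤ N → False := by
    intro M hM hle
    apply hgood
    obtain ⟨s, hs1, hs2⟩ := hM (fun i => f (Fin.castLE hle i))
    refine ⟨s.map ⟨Fin.castLE hle, Fin.castLE_injective hle⟩, ?_, ?_⟩
    · rw [Finset.card_map]; exact hs1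
    · rw [Finset.sum_map]; exact hs2
  have hSne : ∃ M : ℕ, ∀ g : Fin M → (Fin r → ZMod n),
      ∃ s : Finset (Fin M), s.card = k * n ∧ ∑ i ∈ s, g i = 0 := by
    refine ⟨Fintype.card (Fin r → ZMod n) * (k * n), fun g => ?_⟩
    have hpig : ∃ y ∈ (univ : Finset (Fin r → ZMod n)),
        k * n ≤ (univ.filter fun x => g x = y).card := by
      apply Finset.exists_le_card_fiber_of_mul_le_card_of_maps_to
        (fun a _ => Finset.mem_univ (g a)) Finset.univ_nonempty
      rw [Finset.card_univ, Finset.card_univ, Fintype.card_fin]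
    obtain ⟨y, _, hy⟩ := hpig
    obtain ⟨s', hs'sub, hs'card⟩ := Finset.exists_subset_card_eq hy
    refine ⟨s', hs'card, ?_⟩
    have hconst : ∀ i ∈ s', g i = y := fun i hi => (Finset.mem_filter.mp (hs'sub hi)).2
    rw [Finset.sum_congr rfl hconst, Finset.sum_const, hs'card]
    have hny : n • y = 0 := by
      funext j
      simp [nsmul_eq_mul, ZMod.natCast_self]
    rw [mul_smul, hny, smul_zero]
  constructor
  · refine ⟨f, fun i j => ?_, hgood⟩
    by_cases h : f0 i j <;> simp [hfdef, h]
  · rw [EGZConst]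
    by_contra hlt
    push_neg at hlt
    have hmem := Nat.sInf_mem (s := {M : ℕ | ∀ g : Fin M → (Fin r → ZMod n),
      ∃ s : Finset (Fin M), s.card = k * n ∧ ∑ i ∈ s, g i = 0}) hSne
    exact hS _ hmem (le_trans hlt (le_refl N))
end
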